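/- Let Φ : F → M be a surjective monoid map with F free of finite rank, R its kernel congruence, and ⪯ a monoidal well-order. Let {a_i} be the minimal generating set of the ideal in(R) of F, and for each i let b_i be the R-normal form of a_i. Then B = {(a_i, b_i)} is the unique reduced Gröbner basis for M with respect to ⪯. -/

import Mathlib

namespace Stmt8

variable {n : ℕ} {M : Type*} [AddCommMonoid M]

/-- The set of initial terms of the kernel congruence of `Φ`: elements that are the
larger member of a non-diagonal related pair. -/
def inR (Φ : (Fin n → ℕ) →+ M) (lt : (Fin n → ℕ) → (Fin n → ℕ) → Prop) :
    Set (Fin n → ℕ) :=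
  {x | ∃ a, lt a x ∧ Φ a = Φ x}

/-- `b` is the `R`-normal form of `x`: the `⪯`-minimal element of the congruence class. -/
def IsNormalForm (Φ : (Fin n → ℕ) →+ M) (lt : (Fin n → ℕ) → (Fin n → ℕ) → Prop)
    (x b : Fin n → ℕ) : Prop :=
  Φ b = Φ x ∧ ∀ c, Φ c = Φ x → c ≠ b → lt b c

/-- `B` is a Gröbner basis for `M` w.r.t. `lt`. -/
def IsGroebner (Φ : (Fin n → ℕ) →+ M) (lt : (Fin n → ℕ) → (Fin n → ℕ) → Prop)
    (B : Set ((Fin n → ℕ) × (Fin n → ℕ))) : Prop :=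
  B.Finite ∧ (∀ p ∈ B, Φ p.1 = Φ p.2 ∧ lt p.2 p.1) ∧
    inR Φ lt = {x | ∃ p ∈ B, ∃ f, x = p.1 + f}

/-- `B` is a reduced Gröbner basis: no term of any other element of `B` lies in the
monoid ideal generated by the initial term of an element of `B`. -/
def IsReducedGroebner (Φ : (Fin n → ℕ) →+ M) (lt : (Fin n → ℕ) → (Fin n → ℕ) → Prop)
    (B : Set ((Fin n → ℕ) × (Fin n → ℕ))) : Prop :=
  IsGroebner Φ lt B ∧ ∀ p ∈ B, ∀ q ∈ B, q ≠ p →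
    (¬∃ f, q.1 = p.1 + f) ∧ (¬∃ f, q.2 = p.1 + f)

section Aux

variable {Φ : (Fin n → ℕ) →+ M} {lt : (Fin n → ℕ) → (Fin n → ℕ) → Prop}

lemma aux_asymm (hwo : IsWellOrder (Fin n → ℕ) lt) {a b : Fin n → ℕ}
    (h : lt a b) (h' : lt b a) : False :=
  hwo.toIsWellFounded.wf.asymmetric a b h h'

lemma aux_irrefl (hwo : IsWellOrder (Fin n → ℕ) lt) {a : Fin n → ℕ} (h : lt a a) : False :=
  aux_asymm hwo h h

lemma aux_zero_lt (hwo : IsWellOrder (Fin n → ℕ) lt)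
    (hmon : ∀ a b c : Fin n → ℕ, lt a b → lt (a + c) (b + c))
    {x : Fin n → ℕ} (hx : x ≠ 0) : lt 0 x := by
  haveI := hwo
  rcases trichotomous_of lt 0 x with h | h | h
  · exact h
  · exact absurd h.symm hx
  · exfalso
    have key : ∀ k : ℕ, lt ((k + 1) • x) (k • x) := by
      intro k
      have h1 : lt (x + k • x) (0 + k • x) := hmon x 0 (k • x) h
      rw [zero_add] at h1
      rw [succ_nsmul, add_comm (k • x) x]
      exact h1
    obtain ⟨m, hm, hmin⟩ := hwo.toIsWellFounded.wf.has_min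
      (Set.range fun k : ℕ => k • x) ⟨0 • x, 0, rfl⟩
    obtain ⟨k, rfl⟩ := hm
    exact hmin ((k + 1) • x) ⟨k + 1, rfl⟩ (key k)

lemma aux_lt_add (hwo : IsWellOrder (Fin n → ℕ) lt)
    (hmon : ∀ a b c : Fin n → ℕ, lt a b → lt (a + c) (b + c))
    {f : Fin n → ℕ} (hf : f ≠ 0) (a : Fin n → ℕ) : lt a (a + f) := by
  have h1 : lt (0 + a) (f + a) := hmon 0 f a (aux_zero_lt hwo hmon hf)
  rw [zero_add, add_comm f a] at h1
  exact h1

lemma aux_inR_add (hmon : ∀ a b c : Fin n → ℕ, lt a b → lt (a + c) (b + c))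
    {x : Fin n → ℕ} (hx : x ∈ inR Φ lt) (f : Fin n → ℕ) : x + f ∈ inR Φ lt := by
  obtain ⟨a, ha, hΦ⟩ := hx
  exact ⟨a + f, hmon a x f ha, by simp [map_add, hΦ]⟩

/-- Normal forms exist. -/
lemma aux_nf_exists (hwo : IsWellOrder (Fin n → ℕ) lt) (x : Fin n → ℕ) :
    ∃ b, IsNormalForm Φ lt x b := by
  haveI := hwo
  obtain ⟨b, hb, hmin⟩ := hwo.toIsWellFounded.wf.has_min {c | Φ c = Φ x} ⟨x, rfl⟩
  refine ⟨b, hb, fun c hc hne => ?_⟩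
  rcases trichotomous_of lt b c with h | h | h
  · exact h
  · exact absurd h.symm hne
  · exact absurd h (hmin c hc)

lemma aux_nf_unique (hwo : IsWellOrder (Fin n → ℕ) lt) {x b b' : Fin n → ℕ}
    (h : IsNormalForm Φ lt x b) (h' : IsNormalForm Φ lt x b') : b = b' := by
  by_contra hne
  exact aux_asymm hwo (h.2 b' h'.1 (Ne.symm hne)) (h'.2 b h.1 hne)

lemma aux_nf_not_inR (hwo : IsWellOrder (Fin n → ℕ) lt) {x b : Fin n → ℕ}
    (h : IsNormalForm Φ lt x b) : b ∉ inR Φ lt := by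
  rintro ⟨c, hc, hΦ⟩
  have hcx : Φ c = Φ x := hΦ.trans h.1
  have hne : c ≠ b := fun he => aux_irrefl hwo (he ▸ hc)
  exact aux_asymm hwo hc (h.2 c hcx hne)

/-- Every element of `inR` is generated by a minimal element. -/
lemma aux_gen (hwo : IsWellOrder (Fin n → ℕ) lt)
    (hmon : ∀ a b c : Fin n → ℕ, lt a b → lt (a + c) (b + c))
    {x : Fin n → ℕ} (hx : x ∈ inR Φ lt) :
    ∃ a, (a ∈ inR Φ lt ∧ ¬∃ s ∈ inR Φ lt, ∃ f, f ≠ 0 ∧ a = s + f) ∧ ∃ f, x = a + f := by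
  induction x using hwo.toIsWellFounded.wf.induction with
  | _ x ih =>
    by_cases hA : ∃ s ∈ inR Φ lt, ∃ f, f ≠ 0 ∧ x = s + f
    · obtain ⟨s, hs, f, hf, rfl⟩ := hA
      obtain ⟨a, ha, g, hg⟩ := ih s (aux_lt_add hwo hmon hf s) hs
      exact ⟨a, ha, g + f, by rw [hg, add_assoc]⟩
    · exact ⟨x, ⟨hx, hA⟩, 0, (add_zero x).symm⟩

/-- The minimal generating set is finite (Dickson's lemma). -/
lemma aux_A_finite (hmon : ∀ a b c : Fin n → ℕ, lt a b → lt (a + c) (b + c)) :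
    Set.Finite {a | a ∈ inR Φ lt ∧ ¬∃ s ∈ inR Φ lt, ∃ f, f ≠ 0 ∧ a = s + f} := by
  set A := {a | a ∈ inR Φ lt ∧ ¬∃ s ∈ inR Φ lt, ∃ f, f ≠ 0 ∧ a = s + f} with hA
  have hanti : IsAntichain (· ≤ ·) A := by
    intro a ha b hb hne hle
    refine hb.2 ⟨a, ha.1, b - a, ?_, ?_⟩
    · intro h0
      apply hne
      funext i
      have := congrFun h0 i
      simp only [Pi.sub_apply, Pi.zero_apply] at this
      exact le_antisymm (hle i) (Nat.le_of_sub_eq_zero this)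
    · funext i
      simp only [Pi.add_apply, Pi.sub_apply]
      exact (Nat.add_sub_cancel' (hle i)).symm
  exact hanti.finite_of_partiallyWellOrderedOn
    (Set.isPWO_of_wellQuasiOrderedLE A)

end Aux

/-- Let `Φ : ℕⁿ → M` be surjective with kernel congruence `R`, `lt` a total
monoidal well-order.  Let `A` be the minimal generating set of the ideal `in(R)` (its
elements not of the form `s + f` with `s ∈ in(R)`, `f ≠ 0`), and pair each `a ∈ A` with
its `R`-normal form.  The resulting set is the unique reduced Gröbner basis for `M`. -/
theorem reduced_groebner_basis_unique
    (Φ : (Fin n → ℕ) →+ M) (hsurj : Function.Surjective Φ)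
    (lt : (Fin n → ℕ) → (Fin n → ℕ) → Prop)
    (hwo : IsWellOrder (Fin n → ℕ) lt)
    (hmon : ∀ a b c : Fin n → ℕ, lt a b → lt (a + c) (b + c)) :
    ∀ B : Set ((Fin n → ℕ) × (Fin n → ℕ)),
      IsReducedGroebner Φ lt B ↔
        B = {p | (p.1 ∈ inR Φ lt ∧ ¬∃ s ∈ inR Φ lt, ∃ f, f ≠ 0 ∧ p.1 = s + f) ∧
              IsNormalForm Φ lt p.1 p.2} := by
  haveI := hwo
  intro B
  set A : Set (Fin n → ℕ) :=
    {a | a ∈ inR Φ lt ∧ ¬∃ s ∈ inR Φ lt, ∃ f, f ≠ 0 ∧ a = s + f} with hAdef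
  set C : Set ((Fin n → ℕ) × (Fin n → ℕ)) :=
    {p | (p.1 ∈ inR Φ lt ∧ ¬∃ s ∈ inR Φ lt, ∃ f, f ≠ 0 ∧ p.1 = s + f) ∧
      IsNormalForm Φ lt p.1 p.2} with hCdef
  constructor
  · -- a reduced Gröbner basis must equal `C`
    rintro ⟨⟨hBfin, hBpairs, hBgen⟩, hred⟩
    -- every first component of `B` is in `inR`
    have hB1 : ∀ p ∈ B, p.1 ∈ inR Φ lt := by
      intro p hp
      rw [hBgen]
      exact ⟨p, hp, 0, (add_zero _).symm⟩
    -- every first component of `B` is a minimal generator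
    have hB1A : ∀ p ∈ B, p.1 ∈ A := by
      intro p hp
      refine ⟨hB1 p hp, ?_⟩
      rintro ⟨s, hs, f, hf, hdecomp⟩
      rw [hBgen] at hs
      obtain ⟨q, hq, g, rfl⟩ := hs
      by_cases hpq : p = q
      · subst hpq
        apply hf
        funext i
        have := congrFun hdecomp i
        simp only [Pi.add_apply] at this
        simp only [Pi.zero_apply]
        omega
      · exact (hred q hq p hp hpq).1 ⟨g + f, by rw [hdecomp, add_assoc]⟩
    -- every second component is the normal form of the first
    have hBnf : ∀ p ∈ B, IsNormalForm Φ lt p.1 p.2 := by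
      intro p hp
      refine ⟨(hBpairs p hp).1.symm, ?_⟩
      intro c hc hne
      rcases trichotomous_of lt p.2 c with h | h | h
      · exact h
      · exact absurd h.symm hne
      · exfalso
        have h2 : p.2 ∈ inR Φ lt := ⟨c, h, hc.trans (hBpairs p hp).1⟩
        rw [hBgen] at h2
        obtain ⟨q, hq, f, hqf⟩ := h2
        by_cases hpq : p = q
        · subst hpq
          by_cases hf : f = 0
          · subst hf
            rw [add_zero] at hqf
            exact aux_irrefl hwo (hqf ▸ (hBpairs p hp).2)
          · exact aux_asymm hwo ((hBpairs p hp).2)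
              (hqf ▸ aux_lt_add hwo hmon hf p.1)
        · exact (hred q hq p hp hpq).2 ⟨f, hqf⟩
    ext p
    constructor
    · intro hp
      exact ⟨hB1A p hp, hBnf p hp⟩
    · rintro ⟨hpA, hpnf⟩
      have h1 : p.1 ∈ inR Φ lt := hpA.1
      rw [hBgen] at h1
      obtain ⟨q, hq, f, hqf⟩ := h1
      have hf0 : f = 0 := by
        by_contra hf
        exact hpA.2 ⟨q.1, hB1 q hq, f, hf, hqf⟩
      rw [hf0, add_zero] at hqf
      have h2 : p.2 = q.2 :=
        aux_nf_unique hwo (hqf ▸ hpnf) (hBnf q hq)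
      have : p = q := Prod.ext hqf h2
      rw [this]; exact hq
  · -- `C` is a reduced Gröbner basis
    rintro rfl
    have hNF : ∀ x : Fin n → ℕ, ∃ b, IsNormalForm Φ lt x b := aux_nf_exists hwo
    choose N hN using hNF
    have hCmem : ∀ p ∈ C, p.1 ∈ A ∧ IsNormalForm Φ lt p.1 p.2 := fun p hp => hp
    -- every element of C has a first component in inR and lt p.2 p.1
    have hpairs : ∀ p ∈ C, Φ p.1 = Φ p.2 ∧ lt p.2 p.1 := by
      intro p hp
      obtain ⟨⟨h1, _⟩, hnf⟩ := hp
      refine ⟨hnf.1.symm, ?_⟩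
      obtain ⟨c, hc, hΦc⟩ := h1
      have hne : p.1 ≠ p.2 := by
        intro he
        have hcne : c ≠ p.2 := by
          intro hce
          exact aux_irrefl hwo (by rw [hce, ← he] at hc; exact hc)
        exact aux_asymm hwo hc (he ▸ hnf.2 c hΦc hcne)
      exact hnf.2 p.1 rfl hne
    refine ⟨⟨?_, hpairs, ?_⟩, ?_⟩
    · -- finiteness
      have hsub : C ⊆ (fun a => (a, N a)) '' A := by
        intro p hp
        obtain ⟨hpA, hpnf⟩ := hp
        have : p.2 = N p.1 := aux_nf_unique hwo hpnf (hN p.1)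
        refine ⟨p.1, hpA, ?_⟩
        show (p.1, N p.1) = p
        exact Prod.ext rfl this.symm
      exact Set.Finite.subset ((aux_A_finite hmon).image _) hsub
    · -- generation
      ext x
      constructor
      · intro hx
        obtain ⟨a, haA, f, hxf⟩ := aux_gen hwo hmon hx
        exact ⟨(a, N a), ⟨haA, hN a⟩, f, hxf⟩
      · rintro ⟨p, hp, f, rfl⟩
        exact aux_inR_add hmon hp.1.1 f
    · -- reducedness
      intro p hp q hq hne
      constructor
      · rintro ⟨f, hf⟩
        by_cases hf0 : f = 0
        · subst hf0
          rw [add_zero] at hf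
          have h2 : q.2 = p.2 := aux_nf_unique hwo (hf ▸ hq.2) hp.2
          exact hne (Prod.ext hf h2)
        · exact hq.1.2 ⟨p.1, hp.1.1, f, hf0, hf⟩
      · rintro ⟨f, hf⟩
        exact aux_nf_not_inR hwo hq.2 (hf ▸ aux_inR_add hmon hp.1.1 f)

end Stmt8
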